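/- Let x : A → (0,1) assign weights to a finite set A of events, and suppose δ ≤ 1/4 where δ = min over A ∈ A of x(A)·∏_{B ∈ A, B ≠ A}(1 - x(B)), taking the product over all other events in A. Then ∑_{B ∈ A} x(B) ≤ log₂(1/δ). -/

import Mathlib

open Real Finset

lemma aux_l1 {t : ℝ} (ht : 0 ≤ t) : 1 - t ≤ Real.exp (-(Real.log 2) * t) := by
  have h2 : Real.log 2 ≤ 1 := by
    have := Real.log_le_sub_one_of_pos (by norm_num : (0:ℝ) < 2)
    linarith
  have := Real.add_one_le_exp (-(Real.log 2) * t)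
  have hlog : 0 < Real.log 2 := Real.log_pos (by norm_num)
  nlinarith

lemma aux_l2 {t : ℝ} (ht : 1/2 ≤ t) : 1 - t ≤ Real.exp (-(Real.log 2) * (2 * t)) := by
  have h2 : Real.log 2 ≤ 1 := by
    have := Real.log_le_sub_one_of_pos (by norm_num : (0:ℝ) < 2)
    linarith
  have hlog : 0 < Real.log 2 := Real.log_pos (by norm_num)
  have heq : Real.exp (-(Real.log 2) * (2 * t))
      = Real.exp (-Real.log 2) * Real.exp (-(Real.log 2) * (2*t - 1)) := by
    rw [← Real.exp_add]; ring_nf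
  have he : Real.exp (-Real.log 2) = 1/2 := by
    rw [Real.exp_neg, Real.exp_log (by norm_num : (0:ℝ) < 2)]
    norm_num
  have hexp := Real.add_one_le_exp (-(Real.log 2) * (2*t - 1))
  rw [heq, he]
  nlinarith

theorem stmt3 {ι : Type*} [DecidableEq ι] (A : Finset ι) (hA : A.Nonempty)
    (x : ι → ℝ) (hx : ∀ a ∈ A, x a ∈ Set.Ioo (0:ℝ) 1)
    (δ : ℝ)
    (hδ : δ = A.inf' hA (fun a => x a * ∏ b ∈ A.erase a, (1 - x b)))
    (hδ4 : δ ≤ 1/4) :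
    ∑ a ∈ A, x a ≤ Real.logb 2 (1/δ) := by
  obtain ⟨a, haA, hmin⟩ := A.exists_min_image x hA
  have hlog : 0 < Real.log 2 := Real.log_pos (by norm_num)
  set S := ∑ b ∈ A, x b with hS
  have hsplit : x a + ∑ b ∈ A.erase a, x b = S := Finset.add_sum_erase A x haA
  have hδ' : δ ≤ x a * ∏ b ∈ A.erase a, (1 - x b) := by
    rw [hδ]; exact Finset.inf'_le _ haA
  have hpos : ∀ b ∈ A, 0 < x b * ∏ c ∈ A.erase b, (1 - x c) := by
    intro b hb
    apply mul_pos (hx b hb).1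
    apply Finset.prod_pos
    intro c hc
    have := (hx c (Finset.mem_of_mem_erase hc)).2
    linarith
  have hδpos : 0 < δ := by
    rw [hδ, Finset.lt_inf'_iff]
    exact hpos
  -- erase sum nonneg
  have herasenn : 0 ≤ ∑ b ∈ A.erase a, x b :=
    Finset.sum_nonneg fun b hb => le_of_lt (hx b (Finset.mem_of_mem_erase hb)).1
  have key : δ ≤ Real.exp (-(Real.log 2) * S) := by
    by_cases hxa : x a ≤ 1/2
    · -- product bound with single exponent
      have hprod : ∏ b ∈ A.erase a, (1 - x b)
          ≤ ∏ b ∈ A.erase a, Real.exp (-(Real.log 2) * x b) := by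
        apply Finset.prod_le_prod
        · intro b hb
          have := (hx b (Finset.mem_of_mem_erase hb)).2; linarith
        · intro b hb
          exact aux_l1 (le_of_lt (hx b (Finset.mem_of_mem_erase hb)).1)
      have hprodeq : ∏ b ∈ A.erase a, Real.exp (-(Real.log 2) * x b)
          = Real.exp (-(Real.log 2) * ∑ b ∈ A.erase a, x b) := by
        rw [← Real.exp_sum, Finset.mul_sum]
      have hxae : x a ≤ Real.exp (-(Real.log 2) * x a) := by
        have hmono : Real.exp (-(Real.log 2) * (1/2)) ≤ Real.exp (-(Real.log 2) * x a) := by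
          apply Real.exp_le_exp.2
          nlinarith
        set c := Real.exp (-(Real.log 2) * (1/2)) with hc
        have hcpos : 0 < c := Real.exp_pos _
        have hcsq : c * c = 1/2 := by
          rw [hc, ← Real.exp_add,
            show (-(Real.log 2) * (1/2) + -(Real.log 2) * (1/2)) = -Real.log 2 by ring,
            Real.exp_neg, Real.exp_log (by norm_num : (0:ℝ) < 2)]
          norm_num
        have : (1:ℝ)/2 ≤ c := by nlinarith
        linarith
      calc δ ≤ x a * ∏ b ∈ A.erase a, (1 - x b) := hδ'
        _ ≤ Real.exp (-(Real.log 2) * x a) * Real.exp (-(Real.log 2) * ∑ b ∈ A.erase a, x b) := by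
            rw [← hprodeq]
            apply mul_le_mul hxae hprod (Finset.prod_nonneg ?_) (le_of_lt (Real.exp_pos _))
            intro b hb
            have := (hx b (Finset.mem_of_mem_erase hb)).2; linarith
        _ = Real.exp (-(Real.log 2) * S) := by
            rw [← Real.exp_add, ← hsplit]; ring_nf
    · push_neg at hxa
      -- all weights > 1/2
      have hall : ∀ b ∈ A, 1/2 < x b := fun b hb => lt_of_lt_of_le hxa (hmin b hb)
      rcases Finset.eq_empty_or_nonempty (A.erase a) with he | hne
      · -- A = {a}, contradiction with δ ≤ 1/4
        exfalso
        have hAa : A = {a} := by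
          apply Finset.eq_singleton_iff_unique_mem.2
          refine ⟨haA, fun b hb => ?_⟩
          by_contra hba
          exact absurd (Finset.mem_erase.2 ⟨hba, hb⟩) (by simp [he])
        have : δ = x a := by
          rw [hδ]
          have : A.inf' hA (fun b => x b * ∏ c ∈ A.erase b, (1 - x c))
              = x a * ∏ c ∈ A.erase a, (1 - x c) := by
            apply le_antisymm (Finset.inf'_le _ haA)
            refine Finset.le_inf' _ _ ?_
            intro b hb
            rw [hAa] at hb
            simp only [Finset.mem_singleton] at hb
            rw [hb]
          rw [this, he, Finset.prod_empty, mul_one]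
        linarith
      · obtain ⟨b₀, hb₀⟩ := hne
        have hT : x a ≤ ∑ b ∈ A.erase a, x b := by
          calc x a ≤ x b₀ := hmin b₀ (Finset.mem_of_mem_erase hb₀)
            _ ≤ ∑ b ∈ A.erase a, x b := Finset.single_le_sum
                (fun c hc => le_of_lt (hx c (Finset.mem_of_mem_erase hc)).1) hb₀
        have hprod : ∏ b ∈ A.erase a, (1 - x b)
            ≤ ∏ b ∈ A.erase a, Real.exp (-(Real.log 2) * (2 * x b)) := by
          apply Finset.prod_le_prod
          · intro b hb
            have := (hx b (Finset.mem_of_mem_erase hb)).2; linarith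
          · intro b hb
            exact aux_l2 (le_of_lt (hall b (Finset.mem_of_mem_erase hb)))
        have hprodeq : ∏ b ∈ A.erase a, Real.exp (-(Real.log 2) * (2 * x b))
            = Real.exp (-(Real.log 2) * (2 * ∑ b ∈ A.erase a, x b)) := by
          rw [← Real.exp_sum]
          congr 1
          rw [Finset.mul_sum, Finset.mul_sum]
        have hxa1 : x a ≤ 1 := le_of_lt (hx a haA).2
        calc δ ≤ x a * ∏ b ∈ A.erase a, (1 - x b) := hδ'
          _ ≤ 1 * Real.exp (-(Real.log 2) * (2 * ∑ b ∈ A.erase a, x b)) := by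
              rw [← hprodeq]
              apply mul_le_mul hxa1 hprod (Finset.prod_nonneg ?_) (by norm_num)
              intro b hb
              have := (hx b (Finset.mem_of_mem_erase hb)).2; linarith
          _ ≤ Real.exp (-(Real.log 2) * S) := by
              rw [one_mul]
              apply Real.exp_le_exp.2
              have : x a + ∑ b ∈ A.erase a, x b = S := hsplit
              nlinarith
  -- conclude
  have hlogδ : Real.log δ ≤ -(Real.log 2) * S := by
    calc Real.log δ ≤ Real.log (Real.exp (-(Real.log 2) * S)) :=
          Real.log_le_log hδpos key
      _ = -(Real.log 2) * S := Real.log_exp _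
  rw [Real.logb, Real.log_div one_ne_zero (ne_of_gt hδpos), Real.log_one]
  rw [le_div_iff₀ hlog]
  nlinarith
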